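/- arXiv:2002.10288 — 2 statements merged into one kernel-verified Lean document; each statement's English description precedes it below -/
import Mathlib

section
/- Let k be even and G = G_0(u) ⋄ H(u) be a connected k-uniform hypergraph which is the coalescence of G_0 and H at u, where H is odd-bipartite. If x is a first eigenvector of G with x_u = 0, then Π_{v ∈ e\{u}} x_v = 0 for each edge e of H containing u. -/
open Finset BigOperators

variable {V : Type*}

/-- A `k`-uniform hypergraph given by its edge set: every edge has exactly `k` vertices. -/
def Uniform [DecidableEq V] (E : Finset (Finset V)) (k : ℕ) : Prop :=
  ∀ e ∈ E, e.card = k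

/-- Two vertices are adjacent if some edge contains both. -/
def HAdj [DecidableEq V] (E : Finset (Finset V)) (a b : V) : Prop :=
  a ≠ b ∧ ∃ e ∈ E, a ∈ e ∧ b ∈ e

/-- The hypergraph is connected: every two vertices are joined by a walk. -/
def HConnected [DecidableEq V] (E : Finset (Finset V)) : Prop :=
  ∀ a b : V, Relation.ReflTransGen (HAdj E) a b

/-- `(lam, x)` satisfies the H-eigen equations of the adjacency tensor:
for each vertex `v`, `∑_{e ∋ v} ∏_{w ∈ e \ {v}} x w = lam * (x v)^(k-1)`. -/
def isEig [Fintype V] [DecidableEq V] (E : Finset (Finset V)) (k : ℕ) (lam : ℝ) (x : V → ℝ) :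
    Prop :=
  ∀ v : V, (∑ e ∈ E.filter (fun e => v ∈ e), ∏ w ∈ e.erase v, x w) = lam * x v ^ (k - 1)

/-- The set of H-eigenvalues of the adjacency tensor of the hypergraph. -/
def specH [Fintype V] [DecidableEq V] (E : Finset (Finset V)) (k : ℕ) : Set ℝ :=
  {lam | ∃ x : V → ℝ, x ≠ 0 ∧ isEig E k lam x}

/-- The least H-eigenvalue of the adjacency tensor. -/
noncomputable def lamMin [Fintype V] [DecidableEq V] (E : Finset (Finset V)) (k : ℕ) : ℝ :=
  sInf (specH E k)

/-- A first eigenvector: a real eigenvector associated with the least H-eigenvalue. -/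
def IsFirstEigvec [Fintype V] [DecidableEq V] (E : Finset (Finset V)) (k : ℕ) (x : V → ℝ) :
    Prop :=
  x ≠ 0 ∧ isEig E k (lamMin E k) x


section Aux
open Finset BigOperators
set_option linter.unusedSectionVars false
set_option linter.unusedVariables false

variable {V : Type*} [Fintype V] [DecidableEq V] {k : ℕ}

/-- The polynomial form `∑_{e∈E} ∏_{v∈e} z v`. -/
noncomputable def FF (E : Finset (Finset V)) (z : V → ℝ) : ℝ := ∑ e ∈ E, ∏ v ∈ e, z v

/-- The `k`-th power sum `∑_v (z v)^k`. -/
noncomputable def NN (k : ℕ) (z : V → ℝ) : ℝ := ∑ v, z v ^ k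

lemma NN_nonneg (hk : Even k) (z : V → ℝ) : 0 ≤ NN k z :=
  Finset.sum_nonneg fun v _ => hk.pow_nonneg _

lemma NN_pos (hk : Even k) (hk0 : k ≠ 0) {z : V → ℝ} (hz : z ≠ 0) : 0 < NN k z := by
  obtain ⟨v, hv⟩ := Function.ne_iff.mp hz
  calc (0:ℝ) < z v ^ k := hk.pow_pos hv
    _ ≤ NN k z := Finset.single_le_sum (fun w _ => hk.pow_nonneg (z w)) (Finset.mem_univ v)

lemma FF_smul (E : Finset (Finset V)) (hU : Uniform E k) (c : ℝ) (z : V → ℝ) :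
    FF E (c • z) = c ^ k * FF E z := by
  unfold FF
  rw [Finset.mul_sum]
  refine Finset.sum_congr rfl fun e he => ?_
  rw [← hU e he]
  simp [Finset.prod_mul_distrib, Finset.prod_const]

lemma NN_smul (k : ℕ) (c : ℝ) (z : V → ℝ) : NN k (c • z) = c ^ k * NN k z := by
  unfold NN
  rw [Finset.mul_sum]
  exact Finset.sum_congr rfl fun v _ => by simp [mul_pow]

lemma continuous_FF (E : Finset (Finset V)) : Continuous (FF (V := V) E) := by
  unfold FF
  exact continuous_finset_sum _ fun e _ => continuous_finset_prod _ fun v _ =>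
    continuous_apply v

lemma continuous_NN (k : ℕ) : Continuous (NN (V := V) k) := by
  unfold NN
  exact continuous_finset_sum _ fun v _ => (continuous_apply v).pow k

/-- Summing the eigen-equations against `x` gives `k * FF = lam * NN`. -/
lemma sum_eig {E : Finset (Finset V)} (hU : Uniform E k) (hk0 : k ≠ 0) {lam : ℝ} {x : V → ℝ}
    (h : isEig E k lam x) : (k : ℝ) * FF E x = lam * NN k x := by
  have key : ∑ v, x v * (∑ e ∈ E.filter (fun e => v ∈ e), ∏ w ∈ e.erase v, x w)
      = (k : ℝ) * FF E x := by
    have h1 : ∀ v : V, x v * (∑ e ∈ E.filter (fun e => v ∈ e), ∏ w ∈ e.erase v, x w)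
        = ∑ e ∈ E, if v ∈ e then (∏ w ∈ e, x w) else 0 := by
      intro v
      rw [Finset.mul_sum, Finset.sum_filter]
      refine Finset.sum_congr rfl fun e he => ?_
      by_cases hv : v ∈ e
      · simp only [hv, if_true]
        exact Finset.mul_prod_erase e x hv
      · simp [hv]
    calc ∑ v, x v * (∑ e ∈ E.filter (fun e => v ∈ e), ∏ w ∈ e.erase v, x w)
        = ∑ v, ∑ e ∈ E, if v ∈ e then (∏ w ∈ e, x w) else 0 :=
          Finset.sum_congr rfl fun v _ => h1 v
      _ = ∑ e ∈ E, ∑ v, if v ∈ e then (∏ w ∈ e, x w) else 0 := Finset.sum_comm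
      _ = ∑ e ∈ E, (e.card : ℝ) * ∏ w ∈ e, x w := by
          refine Finset.sum_congr rfl fun e he => ?_
          rw [Finset.sum_ite_mem, Finset.univ_inter, Finset.sum_const, nsmul_eq_mul]
      _ = (k : ℝ) * FF E x := by
          unfold FF; rw [Finset.mul_sum]
          exact Finset.sum_congr rfl fun e he => by rw [hU e he]
  rw [← key]
  unfold NN
  rw [Finset.mul_sum]
  refine Finset.sum_congr rfl fun v _ => ?_
  rw [h v]
  have : x v * (lam * x v ^ (k - 1)) = lam * (x v ^ (k-1) * x v) := by ring
  rw [this, ← pow_succ, Nat.sub_add_cancel (Nat.one_le_iff_ne_zero.mpr hk0)]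

/-- If `z` is a zero of the globally nonnegative function `k*FF - mu*NN`, it satisfies the
eigen-equations with eigenvalue `mu`. -/
lemma eig_of_min {E : Finset (Finset V)} (hk0 : k ≠ 0) {mu : ℝ} {z : V → ℝ}
    (hmin : ∀ w : V → ℝ, mu * NN k w ≤ (k : ℝ) * FF E w)
    (heq : (k : ℝ) * FF E z = mu * NN k z) : isEig E k mu z := by
  intro v
  set A : ℝ := ∑ e ∈ E.filter (fun e => v ∈ e), ∏ w ∈ e.erase v, z w with hA
  set B : ℝ := ∑ e ∈ E.filter (fun e => ¬ v ∈ e), ∏ w ∈ e, z w with hB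
  set C : ℝ := ∑ w ∈ Finset.univ.erase v, z w ^ k with hC
  have hg : ∀ t : ℝ, (k : ℝ) * FF E (Function.update z v t)
      - mu * NN k (Function.update z v t) = (k : ℝ) * (t * A + B) - mu * (t ^ k + C) := by
    intro t
    have hFF : FF E (Function.update z v t) = t * A + B := by
      unfold FF
      rw [← Finset.sum_filter_add_sum_filter_not E (fun e => v ∈ e)]
      congr 1
      · rw [hA, Finset.mul_sum]
        refine Finset.sum_congr rfl fun e he => ?_
        rw [Finset.prod_update_of_mem (Finset.mem_filter.mp he).2 z t, ← Finset.erase_eq]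
      · refine Finset.sum_congr rfl fun e he => ?_
        exact Finset.prod_update_of_notMem (Finset.mem_filter.mp he).2 z t
    have hNN : NN k (Function.update z v t) = t ^ k + C := by
      unfold NN
      have : ∀ w : V, (Function.update z v t w) ^ k
          = Function.update (fun w => z w ^ k) v (t ^ k) w := by
        intro w
        rcases eq_or_ne w v with rfl | hw
        · simp
        · simp [Function.update_of_ne hw]
      rw [Finset.sum_congr rfl fun w _ => this w]
      rw [Finset.sum_update_of_mem (Finset.mem_univ v) _ _, ← Finset.erase_eq]
    rw [hFF, hNN]
  have hglobal : ∀ t : ℝ, (0:ℝ) ≤ (k : ℝ) * (t * A + B) - mu * (t ^ k + C) := by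
    intro t
    rw [← hg]
    linarith [hmin (Function.update z v t)]
  have hval : (k : ℝ) * (z v * A + B) - mu * (z v ^ k + C) = 0 := by
    have := hg (z v)
    rw [Function.update_eq_self] at this
    linarith [this]
  have hloc : IsLocalMin (fun t => (k : ℝ) * (t * A + B) - mu * (t ^ k + C)) (z v) :=
    Filter.Eventually.of_forall (fun t => by
      simp only []
      rw [hval]
      exact hglobal t)
  have hd : HasDerivAt (fun t => (k : ℝ) * (t * A + B) - mu * (t ^ k + C))
      ((k : ℝ) * A - mu * ((k : ℕ) * z v ^ (k - 1))) (z v) := by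
    have h1 : HasDerivAt (fun t : ℝ => (k : ℝ) * (t * A + B)) ((k : ℝ) * A) (z v) :=
      (((hasDerivAt_mul_const A)).add_const B).const_mul _
    have h2 : HasDerivAt (fun t : ℝ => mu * (t ^ k + C)) (mu * ((k : ℕ) * z v ^ (k - 1))) (z v) :=
      ((hasDerivAt_pow k (z v)).add_const C).const_mul _
    exact h1.sub h2
  have hzero := hloc.deriv_eq_zero
  rw [hd.deriv] at hzero
  have hkpos : (0:ℝ) < (k : ℝ) := by exact_mod_cast Nat.pos_of_ne_zero hk0
  have : (k:ℝ) * A = (k:ℝ) * (mu * z v ^ (k-1)) := by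
    push_cast at hzero ⊢
    ring_nf at hzero ⊢
    linarith
  exact mul_left_cancel₀ hkpos.ne' this

/-- The variational characterization: the least H-eigenvalue bounds the form from below. -/
lemma lamMin_bound [Nonempty V] {E : Finset (Finset V)} (hU : Uniform E k) (hk : Even k)
    (hk0 : k ≠ 0) :
    (∀ z : V → ℝ, lamMin E k * NN k z ≤ (k : ℝ) * FF E z) := by
  classical
  set S : Set (V → ℝ) := {z | NN k z = 1} with hS
  have hclosed : IsClosed S := isClosed_singleton.preimage (continuous_NN k)
  have hbdd : Bornology.IsBounded S := by
    apply (Metric.isBounded_closedBall (x := (0 : V → ℝ)) (r := 1)).subset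
    intro z hz
    rw [Metric.mem_closedBall]
    rw [dist_pi_le_iff zero_le_one]
    intro v
    rw [Real.dist_eq]
    simp only [Pi.zero_apply, sub_zero]
    have h1 : z v ^ k ≤ 1 := by
      have : z v ^ k ≤ NN k z :=
        Finset.single_le_sum (fun w _ => hk.pow_nonneg (z w)) (Finset.mem_univ v)
      rw [hz] at this; exact this
    have h2 : |z v| ^ k ≤ 1 := by rwa [hk.pow_abs]
    exact (pow_le_one_iff_of_nonneg (abs_nonneg _) hk0).mp h2
  have hcompact : IsCompact S := Metric.isCompact_iff_isClosed_bounded.mpr ⟨hclosed, hbdd⟩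
  have hSne : S.Nonempty := by
    obtain ⟨v0⟩ := ‹Nonempty V›
    refine ⟨fun w => if w = v0 then 1 else 0, ?_⟩
    simp only [hS, NN, Set.mem_setOf_eq]
    rw [Finset.sum_eq_single v0]
    · simp
    · intro w _ hw; simp [hw, zero_pow hk0]
    · simp
  obtain ⟨z₀, hz₀S, hz₀min⟩ := hcompact.exists_isMinOn hSne (continuous_FF E).continuousOn
  set mu := (k : ℝ) * FF E z₀ with hmu
  have hmin : ∀ z : V → ℝ, mu * NN k z ≤ (k : ℝ) * FF E z := by
    intro z
    rcases eq_or_ne z 0 with rfl | hz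
    · have h0 : NN k (0 : V → ℝ) = 0 := by
        simp [NN, zero_pow hk0]
      have h1 : FF E (0 : V → ℝ) = 0 := by
        unfold FF
        refine Finset.sum_eq_zero fun e he => ?_
        refine Finset.prod_eq_zero (Finset.card_pos.mp ?_).choose_spec rfl
        rw [hU e he]; exact Nat.pos_of_ne_zero hk0
      rw [h0, h1]; simp
    · have hN : 0 < NN k z := NN_pos hk hk0 hz
      set c : ℝ := (NN k z) ^ ((k : ℝ)⁻¹) with hc
      have hcpos : 0 < c := Real.rpow_pos_of_pos hN _
      have hck : c ^ k = NN k z := by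
        rw [hc]
        exact_mod_cast Real.rpow_inv_natCast_pow hN.le hk0
      have hmem : c⁻¹ • z ∈ S := by
        simp only [hS, Set.mem_setOf_eq, NN_smul]
        rw [inv_pow, hck]
        exact inv_mul_cancel₀ hN.ne'
      have hle := hz₀min hmem
      rw [Set.mem_setOf_eq] at hle
      have hFz : FF E (c⁻¹ • z) = (c ^ k)⁻¹ * FF E z := by
        rw [FF_smul E hU, inv_pow]
      have h2 : FF E z₀ * c ^ k ≤ FF E z := by
        have hck0 : (0:ℝ) < c ^ k := pow_pos hcpos k
        calc FF E z₀ * c ^ k ≤ FF E (c⁻¹ • z) * c ^ k :=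
              mul_le_mul_of_nonneg_right hle hck0.le
          _ = FF E z := by rw [hFz]; field_simp
      calc mu * NN k z = (k:ℝ) * (FF E z₀ * c ^ k) := by rw [hmu, ← hck]; ring
        _ ≤ (k:ℝ) * FF E z := by
            apply mul_le_mul_of_nonneg_left h2
            exact_mod_cast Nat.zero_le k
  have hz₀S' : NN k z₀ = 1 := hz₀S
  have heqz : (k : ℝ) * FF E z₀ = mu * NN k z₀ := by rw [hz₀S', hmu]; ring
  have heig : isEig E k mu z₀ := eig_of_min hk0 hmin heqz
  have hz₀ne : z₀ ≠ 0 := by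
    intro h
    rw [h] at hz₀S'
    simp [NN, zero_pow hk0] at hz₀S'
  have hmem : mu ∈ specH E k := ⟨z₀, hz₀ne, heig⟩
  have hlb : ∀ lam ∈ specH E k, mu ≤ lam := by
    rintro lam ⟨y, hyne, hyeig⟩
    have h1 := sum_eig hU hk0 hyeig
    have h2 := hmin y
    rw [h1] at h2
    exact le_of_mul_le_mul_right h2 (NN_pos hk hk0 hyne)
  have : lamMin E k = mu := le_antisymm (csInf_le ⟨mu, hlb⟩ hmem) (le_csInf ⟨mu, hmem⟩ hlb)
  rw [this]
  exact hmin

/-- Product of a `±1` sign function. -/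
lemma prod_eps (S t : Finset V) :
    (∏ w ∈ t, (if w ∈ S then (-1:ℝ) else 1)) = (-1) ^ ((t ∩ S).card) := by
  rw [Finset.prod_ite, Finset.prod_const, Finset.prod_const, Finset.filter_mem_eq_inter]
  simp

end Aux

set_option maxHeartbeats 1000000 in
/-- If `H` is odd-bipartite and `x` is a first eigenvector of `G = G₀(u) ⋄ H(u)` with `x u = 0`, then `∏_{v ∈ e∖{u}} x v = 0` for every edge `e` of `H` containing `u`. -/
theorem stmt6 [Fintype V] [DecidableEq V]
    (V0 VH : Finset V) (u : V) (E0 EH : Finset (Finset V)) (k : ℕ)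
    (hk : Even k) (hk0 : 0 < k)
    (hI : V0 ∩ VH = {u}) (hcover : V0 ∪ VH = Finset.univ)
    (hE0 : ∀ e ∈ E0, e ⊆ V0) (hEH : ∀ e ∈ EH, e ⊆ VH)
    (hU : Uniform (E0 ∪ EH) k) (hconn : HConnected (E0 ∪ EH))
    (hE0ne : E0.Nonempty) (hEHne : EH.Nonempty)
    (hodd : ∃ S ⊆ VH, ∀ e ∈ EH, Odd ((e ∩ S).card))
    (x : V → ℝ) (hx : IsFirstEigvec (E0 ∪ EH) k x) (hxu : x u = 0) :
    ∀ e ∈ EH, u ∈ e → (∏ w ∈ e.erase u, x w) = 0 := by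
  classical
  obtain ⟨S, hSsub, hSodd⟩ := hodd
  obtain ⟨hxne, hxeig⟩ := hx
  set E : Finset (Finset V) := E0 ∪ EH with hE
  set lam : ℝ := lamMin E k with hlam
  have hkne : k ≠ 0 := hk0.ne'
  have hk2 : 2 ≤ k := by
    obtain ⟨m, rfl⟩ := hk
    omega
  -- V is nonempty
  obtain ⟨e₀, he₀⟩ := hE0ne
  have he₀card : e₀.card = k := hU e₀ (Finset.mem_union_left _ he₀)
  have hVne : Nonempty V := by
    obtain ⟨v, hv⟩ := Finset.card_pos.mp (by rw [he₀card]; exact hk0)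
    exact ⟨v⟩
  have hmin := lamMin_bound (V := V) hU hk hkne
  rw [← hlam] at hmin
  -- membership helpers
  have hV0H : ∀ v : V, v ∈ V0 → v ∈ VH → v = u := by
    intro v h1 h2
    have : v ∈ ({u} : Finset V) := hI ▸ Finset.mem_inter.mpr ⟨h1, h2⟩
    simpa using this
  have hdisj : Disjoint E0 EH := by
    rw [Finset.disjoint_left]
    intro e he0 heH
    have hsub : e ⊆ {u} := fun v hv => by
      have := hV0H v (hE0 e he0 hv) (hEH e heH hv)
      simp [this]
    have hle := Finset.card_le_card hsub
    rw [hU e (Finset.mem_union_left _ he0), Finset.card_singleton] at hle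
    omega
  have hFFsplit : ∀ z : V → ℝ, FF E z = FF E0 z + FF EH z := fun z =>
    Finset.sum_union hdisj
  -- the sign-flipped vector y
  set eps : V → ℝ := fun v => if v ∈ S then -1 else 1 with heps
  set y : V → ℝ := fun v => if v ∈ VH then eps v * |x v| else x v with hy
  have hyu : y u = 0 := by
    by_cases h : u ∈ VH <;> simp [hy, h, hxu]
  have hyVH : ∀ v ∈ VH, y v = eps v * |x v| := by
    intro v hv; simp [hy, hv]
  have hepsk : ∀ v, eps v ^ k = 1 := by
    intro v
    by_cases h : v ∈ S <;> simp [heps, h, hk.neg_one_pow]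
  have hNy : NN k y = NN k x := by
    unfold NN
    refine Finset.sum_congr rfl fun v _ => ?_
    by_cases h : v ∈ VH
    · simp only [hy, h, if_true, mul_pow, hepsk v, one_mul]
      exact hk.pow_abs (x v)
    · simp [hy, h]
  have hprod0 : ∀ e ∈ E0, (∏ v ∈ e, y v) = ∏ v ∈ e, x v := by
    intro e he
    by_cases hu : u ∈ e
    · rw [Finset.prod_eq_zero hu hyu, Finset.prod_eq_zero hu hxu]
    · refine Finset.prod_congr rfl fun v hv => ?_
      have hvV0 : v ∈ V0 := hE0 e he hv
      have hvnH : v ∉ VH := fun h => hu (by rw [← hV0H v hvV0 h]; exact hv)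
      simp [hy, hvnH]
  have hprodH : ∀ e ∈ EH, (∏ v ∈ e, y v) = -∏ v ∈ e, |x v| := by
    intro e he
    have h1 : (∏ v ∈ e, y v) = (∏ v ∈ e, eps v) * ∏ v ∈ e, |x v| := by
      rw [← Finset.prod_mul_distrib]
      exact Finset.prod_congr rfl fun v hv => hyVH v (hEH e he hv)
    rw [h1, heps, prod_eps, (hSodd e he).neg_one_pow, neg_one_mul]
  have hFy_le : FF E y ≤ FF E x := by
    rw [hFFsplit, hFFsplit]
    have h0 : FF E0 y = FF E0 x := Finset.sum_congr rfl hprod0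
    have hH : FF EH y ≤ FF EH x := by
      refine Finset.sum_le_sum fun e he => ?_
      rw [hprodH e he, ← Finset.abs_prod]
      exact neg_abs_le _
    linarith
  have heqx : (k : ℝ) * FF E x = lam * NN k x := sum_eig hU hkne hxeig
  have heqy : (k : ℝ) * FF E y = lam * NN k y := by
    have h1 := hmin y
    have h2 : (k:ℝ) * FF E y ≤ (k:ℝ) * FF E x :=
      mul_le_mul_of_nonneg_left hFy_le (by positivity)
    rw [hNy]
    rw [hNy] at h1
    linarith
  -- truncations
  set y2 : V → ℝ := fun v => if v ∈ VH.erase u then y v else 0 with hy2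
  set y1 : V → ℝ := fun v => if v ∈ VH.erase u then 0 else y v with hy1
  have hy2u : y2 u = 0 := by simp [hy2]
  have hNsplit : NN k y1 + NN k y2 = NN k y := by
    unfold NN
    rw [← Finset.sum_add_distrib]
    refine Finset.sum_congr rfl fun v _ => ?_
    simp only [hy1, hy2]
    by_cases h : v ∈ VH.erase u
    · rw [if_pos h, if_pos h, zero_pow hkne, zero_add]
    · rw [if_neg h, if_neg h, zero_pow hkne, add_zero]
  have hV0side : ∀ v ∈ V0, v ∉ VH.erase u := by
    intro v hv h
    obtain ⟨hne, hvH⟩ := Finset.mem_erase.mp h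
    exact hne (hV0H v hv hvH)
  have hFFy2 : FF E y2 = FF EH y := by
    rw [hFFsplit]
    have h0 : FF E0 y2 = 0 := by
      refine Finset.sum_eq_zero fun e he => ?_
      obtain ⟨v, hv, hvu⟩ : ∃ v ∈ e, v ≠ u := by
        refine Finset.exists_mem_ne ?_ u
        rw [hU e (Finset.mem_union_left _ he)]; omega
      refine Finset.prod_eq_zero hv ?_
      simp only [hy2]
      rw [if_neg (hV0side v (hE0 e he hv))]
    have hH : FF EH y2 = FF EH y := by
      refine Finset.sum_congr rfl fun e he => ?_
      by_cases hu : u ∈ e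
      · rw [Finset.prod_eq_zero hu hyu, Finset.prod_eq_zero hu hy2u]
      · refine Finset.prod_congr rfl fun v hv => ?_
        have : v ∈ VH.erase u :=
          Finset.mem_erase.mpr ⟨fun h => hu (h ▸ hv), hEH e he hv⟩
        simp only [hy2]
        rw [if_pos this]
    rw [h0, hH, zero_add]
  have hFFy1 : FF E y1 = FF E0 y := by
    rw [hFFsplit]
    have h0 : FF E0 y1 = FF E0 y := by
      refine Finset.sum_congr rfl fun e he => Finset.prod_congr rfl fun v hv => ?_
      simp only [hy1]
      rw [if_neg (hV0side v (hE0 e he hv))]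
    have hH : FF EH y1 = 0 := by
      refine Finset.sum_eq_zero fun e he => ?_
      by_cases hu : u ∈ e
      · refine Finset.prod_eq_zero hu ?_
        have : u ∉ VH.erase u := Finset.notMem_erase u VH
        simp only [hy1]
        rw [if_neg this, hyu]
      · obtain ⟨v, hv⟩ := Finset.card_pos.mp
          (by rw [hU e (Finset.mem_union_right _ he)]; exact hk0)
        refine Finset.prod_eq_zero hv ?_
        have : v ∈ VH.erase u :=
          Finset.mem_erase.mpr ⟨fun h => hu (h ▸ hv), hEH e he hv⟩
        simp only [hy1]
        rw [if_pos this]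
    rw [h0, hH, add_zero]
  -- equality for y2, hence it is an eigenvector
  have hsum : (k:ℝ) * FF E y1 + (k:ℝ) * FF E y2 = lam * NN k y1 + lam * NN k y2 := by
    rw [hFFy1, hFFy2, ← mul_add, ← hFFsplit, heqy, ← hNsplit, mul_add]
  have heq2 : (k:ℝ) * FF E y2 = lam * NN k y2 := by
    have h1 := hmin y1
    have h2 := hmin y2
    linarith
  have heigy2 : isEig E k lam y2 := eig_of_min hkne hmin heq2
  -- the eigen-equation at u
  have hequ := heigy2 u
  rw [hy2u, zero_pow (by omega : k - 1 ≠ 0), mul_zero] at hequ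
  have hfsplit : E.filter (fun e => u ∈ e)
      = E0.filter (fun e => u ∈ e) ∪ EH.filter (fun e => u ∈ e) := by
    rw [hE, Finset.filter_union]
  have hfdisj : Disjoint (E0.filter (fun e => u ∈ e)) (EH.filter (fun e => u ∈ e)) :=
    hdisj.mono (Finset.filter_subset _ _) (Finset.filter_subset _ _)
  rw [hfsplit, Finset.sum_union hfdisj] at hequ
  have h0part : (∑ e ∈ E0.filter (fun e => u ∈ e), ∏ w ∈ e.erase u, y2 w) = 0 := by
    refine Finset.sum_eq_zero fun e he => ?_
    obtain ⟨heE0, hue⟩ := Finset.mem_filter.mp he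
    obtain ⟨v, hv, hvu⟩ : ∃ v ∈ e, v ≠ u := by
      refine Finset.exists_mem_ne ?_ u
      rw [hU e (Finset.mem_union_left _ heE0)]; omega
    refine Finset.prod_eq_zero (Finset.mem_erase.mpr ⟨hvu, hv⟩) ?_
    simp only [hy2]
    rw [if_neg (hV0side v (hE0 e heE0 hv))]
  rw [h0part, zero_add] at hequ
  -- compute the EH part: constant sign times nonnegative products
  set sig : ℝ := if u ∈ S then 1 else -1 with hsig
  have hterm : ∀ e ∈ EH.filter (fun e => u ∈ e),
      (∏ w ∈ e.erase u, y2 w) = sig * ∏ w ∈ e.erase u, |x w| := by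
    intro e he
    obtain ⟨heEH, hue⟩ := Finset.mem_filter.mp he
    have hmemH : ∀ w ∈ e.erase u, w ∈ VH.erase u := by
      intro w hw
      obtain ⟨hwu, hwe⟩ := Finset.mem_erase.mp hw
      exact Finset.mem_erase.mpr ⟨hwu, hEH e heEH hwe⟩
    have h1 : (∏ w ∈ e.erase u, y2 w) = ∏ w ∈ e.erase u, (eps w * |x w|) := by
      refine Finset.prod_congr rfl fun w hw => ?_
      have hwH := hmemH w hw
      have : y2 w = y w := by simp only [hy2]; rw [if_pos hwH]
      rw [this]
      exact hyVH w (Finset.mem_erase.mp hwH).2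
    rw [h1, Finset.prod_mul_distrib]
    congr 1
    have h2 : ((e.erase u) ∩ S) = (e ∩ S).erase u := by
      ext w
      simp only [Finset.mem_inter, Finset.mem_erase]
      tauto
    rw [heps, prod_eps, h2]
    by_cases huS : u ∈ S
    · have huES : u ∈ e ∩ S := Finset.mem_inter.mpr ⟨hue, huS⟩
      rw [Finset.card_erase_of_mem huES]
      have hodd' := hSodd e heEH
      have : Even ((e ∩ S).card - 1) := by
        obtain ⟨m, hm⟩ := hodd'
        rw [hm]
        exact ⟨m, by omega⟩
      rw [this.neg_one_pow, hsig, if_pos huS]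
    · have : u ∉ e ∩ S := fun h => huS (Finset.mem_inter.mp h).2
      rw [Finset.erase_eq_of_notMem this, (hSodd e heEH).neg_one_pow, hsig, if_neg huS]
  rw [Finset.sum_congr rfl hterm, ← Finset.mul_sum] at hequ
  have hsigne : sig ≠ 0 := by
    rw [hsig]; by_cases h : u ∈ S <;> simp [h]
  have hsum0 : (∑ e ∈ EH.filter (fun e => u ∈ e), ∏ w ∈ e.erase u, |x w|) = 0 :=
    (mul_eq_zero.mp hequ).resolve_left hsigne
  have habs : ∀ e ∈ EH.filter (fun e => u ∈ e), (∏ w ∈ e.erase u, |x w|) = 0 := by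
    rw [Finset.sum_eq_zero_iff_of_nonneg
      (fun e _ => Finset.prod_nonneg fun w _ => abs_nonneg _)] at hsum0
    exact hsum0
  intro e heEH hue
  have := habs e (Finset.mem_filter.mpr ⟨heEH, hue⟩)
  rw [← Finset.abs_prod] at this
  exact abs_eq_zero.mp this
end

section
/- Let k be even and G = G_0(u) ⋄ H(u) be a connected k-uniform hypergraph. If y is a first eigenvector of G_0 with y_u ≠ 0, then λ_min(G_0) > λ_min(G) (strict inequality). -/
open Finset BigOperators

variable {V : Type*}

noncomputable def fE [Fintype V] [DecidableEq V] (E : Finset (Finset V)) (x : V → ℝ) : ℝ :=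
  ∑ e ∈ E, ∏ w ∈ e, x w

noncomputable def gk [Fintype V] (k : ℕ) (x : V → ℝ) : ℝ := ∑ v, x v ^ k

lemma eig_identity [Fintype V] [DecidableEq V] {E : Finset (Finset V)} {k : ℕ} {lam : ℝ}
    {x : V → ℝ} (hU : Uniform E k) (hk0 : 0 < k) (hx : isEig E k lam x) :
    lam * gk k x = (k : ℝ) * fE E x := by
  obtain ⟨m, rfl⟩ : ∃ m, k = m + 1 := ⟨k - 1, (Nat.succ_pred_eq_of_pos hk0).symm⟩
  have key : ∀ v : V, lam * x v ^ (m + 1) =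
      ∑ e ∈ E, (if v ∈ e then x v * ∏ w ∈ e.erase v, x w else 0) := by
    intro v
    rw [← Finset.sum_filter]
    have := hx v
    simp only [Nat.add_sub_cancel] at this
    rw [← Finset.mul_sum, this]
    ring
  calc lam * gk (m+1) x = ∑ v, lam * x v ^ (m+1) := by
        rw [gk, Finset.mul_sum]
    _ = ∑ v, ∑ e ∈ E, (if v ∈ e then x v * ∏ w ∈ e.erase v, x w else 0) := by
        exact Finset.sum_congr rfl fun v _ => key v
    _ = ∑ e ∈ E, ∑ v, (if v ∈ e then x v * ∏ w ∈ e.erase v, x w else 0) := Finset.sum_comm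
    _ = ∑ e ∈ E, ∑ v ∈ e, x v * ∏ w ∈ e.erase v, x w := by
        refine Finset.sum_congr rfl fun e _ => ?_
        rw [Finset.sum_ite_mem, Finset.univ_inter]
    _ = ∑ e ∈ E, ∑ v ∈ e, ∏ w ∈ e, x w := by
        refine Finset.sum_congr rfl fun e _ => Finset.sum_congr rfl fun v hv => ?_
        exact Finset.mul_prod_erase e x hv
    _ = ((m+1 : ℕ) : ℝ) * fE E x := by
        rw [fE, Finset.mul_sum]
        refine Finset.sum_congr rfl fun e he => ?_
        rw [Finset.sum_const, hU e he, nsmul_eq_mul]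

lemma hasStrictFDerivAt_gk [Fintype V] (k : ℕ) (x : V → ℝ) :
    HasStrictFDerivAt (gk k)
      (∑ v : V, ((k : ℝ) * x v ^ (k-1)) • (ContinuousLinearMap.proj v : (V → ℝ) →L[ℝ] ℝ)) x := by
  have : ∀ v : V, v ∈ Finset.univ → HasStrictFDerivAt (fun y : V → ℝ => y v ^ k)
      (((k : ℝ) * x v ^ (k-1)) • (ContinuousLinearMap.proj v : (V → ℝ) →L[ℝ] ℝ)) x := by
    intro v _
    exact (hasStrictDerivAt_pow k (x v)).comp_hasStrictFDerivAt x
      (hasStrictFDerivAt_apply v x)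
  exact HasStrictFDerivAt.fun_sum this

lemma hasStrictFDerivAt_fE [Fintype V] [DecidableEq V] (E : Finset (Finset V)) (x : V → ℝ) :
    HasStrictFDerivAt (fE E)
      (∑ e ∈ E, ∑ v ∈ e, (∏ w ∈ e.erase v, x w) • (ContinuousLinearMap.proj v : (V → ℝ) →L[ℝ] ℝ)) x := by
  refine HasStrictFDerivAt.fun_sum fun e _ => ?_
  exact HasStrictFDerivAt.finset_prod fun w _ => (hasStrictFDerivAt_apply w x)

lemma fE_deriv_apply [Fintype V] [DecidableEq V] (E : Finset (Finset V)) (x : V → ℝ) (v : V) :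
    (∑ e ∈ E, ∑ w ∈ e, (∏ u ∈ e.erase w, x u) • (ContinuousLinearMap.proj w : (V → ℝ) →L[ℝ] ℝ))
      (Pi.single v 1) = ∑ e ∈ E.filter (fun e => v ∈ e), ∏ w ∈ e.erase v, x w := by
  simp only [ContinuousLinearMap.sum_apply, ContinuousLinearMap.smul_apply,
    ContinuousLinearMap.proj_apply, Pi.single_apply, smul_eq_mul, mul_ite, mul_one, mul_zero,
    Finset.sum_ite_eq', Finset.sum_filter]

lemma gk_deriv_apply [Fintype V] [DecidableEq V] (k : ℕ) (x : V → ℝ) (v : V) :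
    (∑ w : V, ((k : ℝ) * x w ^ (k-1)) • (ContinuousLinearMap.proj w : (V → ℝ) →L[ℝ] ℝ))
      (Pi.single v 1) = (k : ℝ) * x v ^ (k-1) := by
  simp only [ContinuousLinearMap.sum_apply, ContinuousLinearMap.smul_apply,
    ContinuousLinearMap.proj_apply, Pi.single_apply, smul_eq_mul, mul_ite, mul_one, mul_zero,
    Finset.sum_ite_eq', Finset.mem_univ, if_true]

lemma gk_pos [Fintype V] {k : ℕ} (hk : Even k) {x : V → ℝ} (hx : x ≠ 0) : 0 < gk k x := by
  obtain ⟨v, hv⟩ := Function.ne_iff.mp hx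
  exact Finset.sum_pos' (fun i _ => hk.pow_nonneg _) ⟨v, Finset.mem_univ v, hk.pow_pos hv⟩

lemma gk_smul [Fintype V] (k : ℕ) (s : ℝ) (x : V → ℝ) : gk k (s • x) = s ^ k * gk k x := by
  simp [gk, Finset.mul_sum, mul_pow]

lemma fE_smul [Fintype V] [DecidableEq V] {E : Finset (Finset V)} {k : ℕ} (hU : Uniform E k)
    (s : ℝ) (x : V → ℝ) : fE E (s • x) = s ^ k * fE E x := by
  unfold fE
  rw [Finset.mul_sum]
  refine Finset.sum_congr rfl fun e he => ?_
  rw [Pi.smul_def]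
  simp only [smul_eq_mul, Finset.prod_mul_distrib, Finset.prod_const, hU e he]

lemma exists_unit [Fintype V] [DecidableEq V] {E : Finset (Finset V)} {k : ℕ}
    (hU : Uniform E k) (hk : Even k) (hk0 : 0 < k) {x : V → ℝ} (hx : x ≠ 0) :
    ∃ s : ℝ, gk k (s • x) = 1 ∧ fE E (s • x) = fE E x / gk k x := by
  have hc : 0 < gk k x := gk_pos hk hx
  have hsk : ((gk k x) ^ (-(k : ℝ)⁻¹)) ^ (k : ℕ) = (gk k x)⁻¹ := by
    rw [← Real.rpow_natCast ((gk k x) ^ (-(k:ℝ)⁻¹)) k, ← Real.rpow_mul hc.le]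
    rw [show -(k:ℝ)⁻¹ * (k:ℕ) = -1 by
      field_simp]
    rw [Real.rpow_neg_one]
  refine ⟨(gk k x) ^ (-(k : ℝ)⁻¹), ?_, ?_⟩
  · rw [gk_smul, hsk]
    field_simp
  · rw [fE_smul hU, hsk, inv_mul_eq_div]

lemma lamMin_mul_le [Fintype V] [DecidableEq V] {E : Finset (Finset V)} {k : ℕ}
    (hU : Uniform E k) (hk : Even k) (hk0 : 0 < k) {z : V → ℝ} (hz : z ≠ 0) :
    lamMin E k * gk k z ≤ (k : ℝ) * fE E z := by
  classical
  have hgc : Continuous (gk (V := V) k) :=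
    continuous_finset_sum _ fun v _ => (continuous_apply v).pow k
  have hfc : Continuous (fE E) :=
    continuous_finset_sum _ fun e _ => continuous_finset_prod _ fun w _ => continuous_apply w
  set S : Set (V → ℝ) := {x | gk k x = 1} with hS
  have hclosed : IsClosed S := isClosed_eq hgc continuous_const
  have hsub : S ⊆ Metric.closedBall 0 1 := by
    intro x hx
    rw [Metric.mem_closedBall, dist_zero_right]
    refine (pi_norm_le_iff_of_nonneg zero_le_one).mpr fun v => ?_
    rw [Real.norm_eq_abs]
    have h1 : x v ^ k ≤ 1 := by
      have := Finset.single_le_sum (f := fun v => x v ^ k) (fun i _ => hk.pow_nonneg _)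
        (Finset.mem_univ v)
      rw [show (∑ w, x w ^ k) = 1 from hx] at this
      exact this
    have h2 : |x v| ^ k ≤ 1 := by rwa [hk.pow_abs]
    exact (pow_le_one_iff_of_nonneg (abs_nonneg _) hk0.ne').mp h2
  have hcomp : IsCompact S :=
    (isCompact_closedBall (0 : V → ℝ) 1).of_isClosed_subset hclosed hsub
  obtain ⟨s₁, hgs₁, hfs₁⟩ := exists_unit hU hk hk0 hz
  have hSne : S.Nonempty := ⟨s₁ • z, hgs₁⟩
  obtain ⟨x0, hx0S, hmin⟩ := hcomp.exists_isMinOn hSne hfc.continuousOn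
  have hx0g : gk k x0 = 1 := hx0S
  have hx0ne : x0 ≠ 0 := by
    rintro rfl
    rw [show gk k (0 : V → ℝ) = 0 by simp [gk, zero_pow hk0.ne']] at hx0g
    norm_num at hx0g
  have hextr : IsLocalExtrOn (fE E) {x | gk k x = gk k x0} x0 := by
    have hseteq : {x : V → ℝ | gk k x = gk k x0} = S := by rw [hx0g]
    exact Or.inl (hseteq ▸ hmin.localize)
  obtain ⟨a, b, hab, heq⟩ := hextr.exists_multipliers_of_hasStrictFDerivAt_1d
    (hasStrictFDerivAt_gk k x0) (hasStrictFDerivAt_fE E x0)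
  obtain ⟨v0, hv0⟩ := Function.ne_iff.mp hx0ne
  have hb : b ≠ 0 := by
    rintro rfl
    have ha : a ≠ 0 := by
      rintro rfl; exact hab (by simp)
    have := congrArg (fun (L : (V → ℝ) →L[ℝ] ℝ) => L (Pi.single v0 1)) heq
    simp only [ContinuousLinearMap.add_apply, ContinuousLinearMap.smul_apply,
      ContinuousLinearMap.zero_apply, smul_eq_mul, zero_mul, add_zero, zero_smul] at this
    rw [gk_deriv_apply] at this
    have hkne : ((k : ℝ) * x0 v0 ^ (k - 1)) ≠ 0 := by
      refine mul_ne_zero (Nat.cast_ne_zero.mpr hk0.ne') (pow_ne_zero _ hv0)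
    exact hkne (by
      rcases mul_eq_zero.mp this with h | h
      · exact absurd h ha
      · exact h)
  set lam : ℝ := -(a / b) * k with hlamdef
  have hEig : isEig E k lam x0 := by
    intro v
    have := congrArg (fun (L : (V → ℝ) →L[ℝ] ℝ) => L (Pi.single v 1)) heq
    simp only [ContinuousLinearMap.add_apply, ContinuousLinearMap.smul_apply,
      ContinuousLinearMap.zero_apply, smul_eq_mul] at this
    rw [gk_deriv_apply, fE_deriv_apply] at this
    have hF : (∑ e ∈ E.filter (fun e => v ∈ e), ∏ w ∈ e.erase v, x0 w)
        = -(a/b) * ((k:ℝ) * x0 v ^ (k-1)) := by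
      field_simp
      linarith
    rw [hF, hlamdef]
    ring
  have hlam : lam = (k : ℝ) * fE E x0 := by
    have h := eig_identity hU hk0 hEig
    rw [hx0g, mul_one] at h
    exact h
  have hlb : ∀ μ ∈ specH E k, lam ≤ μ := by
    rintro μ ⟨x, hxne, hEigx⟩
    have hcx : 0 < gk k x := gk_pos hk hxne
    obtain ⟨s, hgs, hfs⟩ := exists_unit hU hk hk0 hxne
    have hid : μ * gk k x = (k : ℝ) * fE E x := eig_identity hU hk0 hEigx
    have h2 : (k : ℝ) * fE E (s • x) = μ := by
      rw [hfs, ← mul_div_assoc, ← hid, mul_div_assoc, div_self hcx.ne', mul_one]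
    have h3 : fE E x0 ≤ fE E (s • x) := hmin hgs
    rw [hlam, ← h2]
    have hkR : (0:ℝ) ≤ k := Nat.cast_nonneg k
    exact mul_le_mul_of_nonneg_left h3 hkR
  have hmem : lam ∈ specH E k := ⟨x0, hx0ne, hEig⟩
  have h4 : lamMin E k ≤ lam := csInf_le ⟨lam, hlb⟩ hmem
  -- conclude
  have hcz : 0 < gk k z := gk_pos hk hz
  have h5 : fE E x0 ≤ fE E (s₁ • z) := hmin hgs₁
  calc lamMin E k * gk k z ≤ lam * gk k z := mul_le_mul_of_nonneg_right h4 hcz.le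
    _ ≤ ((k:ℝ) * (fE E z / gk k z)) * gk k z := by
        have h6 : lam ≤ (k:ℝ) * (fE E z / gk k z) := by
          rw [hlam, ← hfs₁]
          exact mul_le_mul_of_nonneg_left h5 (Nat.cast_nonneg k)
        exact mul_le_mul_of_nonneg_right h6 hcz.le
    _ = (k:ℝ) * fE E z := by field_simp


/-- If `y` is a first eigenvector of `G₀` with `y u ≠ 0`, then `λ_min(G₀) > λ_min(G)` for the coalescence `G = G₀(u) ⋄ H(u)`. -/
theorem stmt8 [Fintype V] [DecidableEq V]
    (V0 VH : Finset V) (u : V) (E0 EH : Finset (Finset V)) (k : ℕ)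
    (hk : Even k) (hk0 : 0 < k)
    (hI : V0 ∩ VH = {u}) (hcover : V0 ∪ VH = Finset.univ)
    (hE0 : ∀ e ∈ E0, e ⊆ V0) (hEH : ∀ e ∈ EH, e ⊆ VH)
    (hU : Uniform (E0 ∪ EH) k) (hconn : HConnected (E0 ∪ EH))
    (hE0ne : E0.Nonempty) (hEHne : EH.Nonempty)
    (y : V → ℝ) (hy : IsFirstEigvec E0 k y) (hyu : y u ≠ 0) :
    lamMin (E0 ∪ EH) k < lamMin E0 k := by
  classical
  obtain ⟨hyne, hEigy⟩ := hy
  set lam0 := lamMin E0 k with hlam0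
  have hk2 : 2 ≤ k := by obtain ⟨m, rfl⟩ := hk; omega
  have huV0 : u ∈ V0 := by
    have h : u ∈ V0 ∩ VH := hI ▸ Finset.mem_singleton_self u
    exact (Finset.mem_inter.mp h).1
  have hU0 : Uniform E0 k := fun e he => hU e (Finset.mem_union_left _ he)
  have hdisj : Disjoint E0 EH := by
    rw [Finset.disjoint_left]
    intro e he0 heH
    have hsub : e ⊆ {u} := by
      rw [← hI]; exact Finset.subset_inter (hE0 e he0) (hEH e heH)
    have hcard := hU e (Finset.mem_union_left _ he0)
    have hle := Finset.card_le_card hsub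
    rw [hcard, Finset.card_singleton] at hle
    omega
  obtain ⟨eh, heh, hueh⟩ : ∃ e ∈ EH, u ∈ e := by
    by_contra hno
    push_neg at hno
    obtain ⟨e1, he1⟩ := hEHne
    obtain ⟨w, hwe1, hwu⟩ : ∃ w ∈ e1, w ≠ u := by
      by_contra hww
      push_neg at hww
      have hsub : e1 ⊆ {u} := fun w hw => Finset.mem_singleton.mpr (hww w hw)
      have h1 := Finset.card_le_card hsub
      rw [hU e1 (Finset.mem_union_right _ he1), Finset.card_singleton] at h1
      omega
    have hstep : ∀ c, Relation.ReflTransGen (HAdj (E0 ∪ EH)) w c → (c ∈ VH ∧ c ≠ u) := by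
      intro c hc
      induction hc with
      | refl => exact ⟨hEH e1 he1 hwe1, hwu⟩
      | @tail b c hR hadj ih =>
        obtain ⟨hne, e, he, hae, hbe⟩ := hadj
        rcases Finset.mem_union.mp he with h0 | hH
        · exfalso
          have hby : b ∈ V0 ∩ VH := Finset.mem_inter.mpr ⟨hE0 e h0 hae, ih.1⟩
          rw [hI, Finset.mem_singleton] at hby
          exact ih.2 hby
        · refine ⟨hEH e hH hbe, ?_⟩
          rintro rfl
          exact hno e hH hbe
    exact (hstep u (hconn w u)).2 rfl
  have hehcard : eh.card = k := hU eh (Finset.mem_union_right _ heh)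
  -- eigen equation outside V0
  have hout : ∀ v, v ∉ V0 → lam0 * y v ^ k = 0 := by
    intro v hv
    have hfil : E0.filter (fun e => v ∈ e) = ∅ := by
      rw [Finset.filter_eq_empty_iff]
      intro e he hve
      exact hv (hE0 e he hve)
    have h := hEigy v
    rw [hfil, Finset.sum_empty] at h
    obtain ⟨m, rfl⟩ : ∃ m, k = m + 1 := ⟨k-1, (Nat.succ_pred_eq_of_pos hk0).symm⟩
    simp only [Nat.add_sub_cancel] at h
    rw [pow_succ, ← mul_assoc, ← h, zero_mul]
  set N0 : ℝ := ∑ v ∈ V0, y v ^ k with hN0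
  have hN0pos : 0 < N0 :=
    Finset.sum_pos' (fun i _ => hk.pow_nonneg _) ⟨u, huV0, hk.pow_pos hyu⟩
  have hout2 : lam0 * gk k y = lam0 * N0 := by
    rw [gk, ← Finset.sum_sdiff (Finset.subset_univ V0), mul_add, ← hN0]
    have hzero : lam0 * ∑ v ∈ Finset.univ \ V0, y v ^ k = 0 := by
      rw [Finset.mul_sum]
      exact Finset.sum_eq_zero fun v hv => hout v (Finset.mem_sdiff.mp hv).2
    rw [hzero, zero_add]
  have hIdy : lam0 * gk k y = (k : ℝ) * fE E0 y := eig_identity hU0 hk0 hEigy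
  -- the test vector
  set t : ℝ := (|lam0| + 1)⁻¹ with ht
  have htpos : 0 < t := by positivity
  set a : ℝ := -(t * y u) with ha
  set z : V → ℝ := fun v => if v ∈ V0 then y v else if v ∈ eh then a else 0 with hzdef
  have hzu : z u = y u := by simp only [hzdef, if_pos huV0]
  have hnotV0 : ∀ v ∈ eh, v ≠ u → v ∉ V0 := by
    intro v hveh hvne hvV0
    have h : v ∈ V0 ∩ VH := Finset.mem_inter.mpr ⟨hvV0, hEH eh heh hveh⟩
    rw [hI, Finset.mem_singleton] at h
    exact hvne h
  have hz_on_eh : ∀ v ∈ eh.erase u, z v = a := by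
    intro v hv
    obtain ⟨hvne, hveh⟩ := Finset.mem_erase.mp hv
    simp only [hzdef, if_neg (hnotV0 v hveh hvne), if_pos hveh]
  have hfE0z : fE E0 z = fE E0 y := by
    refine Finset.sum_congr rfl fun e he => Finset.prod_congr rfl fun w hw => ?_
    simp only [hzdef, if_pos (hE0 e he hw)]
  have hfEHz : fE EH z = y u * a ^ (k - 1) := by
    rw [fE, Finset.sum_eq_single eh]
    · rw [← Finset.mul_prod_erase eh z hueh, hzu,
        Finset.prod_congr rfl hz_on_eh, Finset.prod_const,
        Finset.card_erase_of_mem hueh, hehcard]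
    · intro e he hne
      obtain ⟨w, hwe, hweh⟩ := Finset.not_subset.mp
        (fun hsub => hne (Finset.eq_of_subset_of_card_le hsub
          (le_of_eq ((hU eh (Finset.mem_union_right _ heh)).trans
            (hU e (Finset.mem_union_right _ he)).symm))))
      refine Finset.prod_eq_zero hwe ?_
      have hwV0 : w ∉ V0 := by
        intro hwV0
        have h : w ∈ V0 ∩ VH := Finset.mem_inter.mpr ⟨hwV0, hEH e he hwe⟩
        rw [hI, Finset.mem_singleton] at h
        exact hweh (h ▸ hueh)
      simp only [hzdef, if_neg hwV0, if_neg hweh]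
    · intro h
      exact absurd heh h
  have hfz : fE (E0 ∪ EH) z = fE E0 y + y u * a ^ (k - 1) := by
    rw [fE, Finset.sum_union hdisj, ← fE, ← fE, hfE0z, hfEHz]
  have hgz : gk k z = N0 + ((k : ℝ) - 1) * a ^ k := by
    rw [gk, ← Finset.sum_sdiff (Finset.subset_univ V0)]
    have h1 : ∑ v ∈ V0, z v ^ k = N0 := by
      refine Finset.sum_congr rfl fun v hv => ?_
      simp only [hzdef, if_pos hv]
    have hsub : eh.erase u ⊆ Finset.univ \ V0 := by
      intro v hv
      obtain ⟨hvne, hveh⟩ := Finset.mem_erase.mp hv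
      exact Finset.mem_sdiff.mpr ⟨Finset.mem_univ v, hnotV0 v hveh hvne⟩
    have h2 : ∑ v ∈ Finset.univ \ V0, z v ^ k = ∑ v ∈ eh.erase u, z v ^ k := by
      refine (Finset.sum_subset hsub fun v hv hvn => ?_).symm
      have hvV0 := (Finset.mem_sdiff.mp hv).2
      have hzv : z v = 0 := by
        by_cases hveh : v ∈ eh
        · exact absurd (Finset.mem_erase.mpr ⟨fun h => hvV0 (by rw [h]; exact huV0), hveh⟩) hvn
        · simp only [hzdef, if_neg hvV0, if_neg hveh]
      rw [hzv, zero_pow hk0.ne']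
    have h3 : ∑ v ∈ eh.erase u, z v ^ k = ((k : ℝ) - 1) * a ^ k := by
      rw [Finset.sum_congr rfl fun v hv => by rw [hz_on_eh v hv],
        Finset.sum_const, Finset.card_erase_of_mem hueh, hehcard, nsmul_eq_mul]
      congr 1
      push_cast [Nat.cast_sub hk0]
      ring
    rw [h1, h2, h3]
    ring
  have hgzpos : 0 < gk k z := by
    rw [hgz]
    have : (0:ℝ) ≤ ((k : ℝ) - 1) * a ^ k := by
      have h1 : (0:ℝ) ≤ a ^ k := hk.pow_nonneg a
      have h2 : (1:ℝ) ≤ (k:ℝ) := by exact_mod_cast hk0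
      nlinarith
    linarith
  have hzne : z ≠ 0 := by
    intro h
    apply hyu
    rw [← hzu, h, Pi.zero_apply]
  have key := lamMin_mul_le hU hk hk0 hzne
  -- the strict inequality
  have hodd : Odd (k - 1) := Nat.Even.sub_odd hk0 hk odd_one
  have hstrict : (k : ℝ) * fE (E0 ∪ EH) z < lam0 * gk k z := by
    rw [hfz, hgz, mul_add, mul_add]
    have hkf : (k : ℝ) * fE E0 y = lam0 * N0 := by rw [← hIdy, hout2]
    rw [hkf]
    have hapow1 : a ^ (k - 1) = -((t * y u) ^ (k - 1)) := hodd.neg_pow _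
    have hapow2 : a ^ k = (t * y u) ^ k := hk.neg_pow _
    rw [hapow1, hapow2]
    have hyuk : 0 < y u ^ k := hk.pow_pos hyu
    obtain ⟨m, hm⟩ : ∃ m, k = m + 1 := ⟨k-1, (Nat.succ_pred_eq_of_pos hk0).symm⟩
    have hsplit : (t * y u) ^ k = (t * y u) ^ (k - 1) * (t * y u) := by
      rw [hm]; simp [pow_succ]
    have hP : 0 < t ^ (k - 1) * y u ^ k := by positivity
    have hyusplit : y u ^ k = y u ^ (k - 1) * y u := by
      rw [hm]; simp [pow_succ]
    have habs1 : lam0 * t ≥ -1 + t := by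
      have h0 : 0 < |lam0| + 1 := by positivity
      have h1 : t * (|lam0| + 1) = 1 := inv_mul_cancel₀ h0.ne'
      have h2 : -|lam0| ≤ lam0 := neg_abs_le lam0
      nlinarith
    have hbound : -(k : ℝ) < lam0 * ((k:ℝ) - 1) * t := by
      have hkR : (2:ℝ) ≤ (k:ℝ) := by exact_mod_cast hk2
      nlinarith [htpos, habs1]
    -- goal: lam0 * N0 + k * (y u * -((t*y u)^(k-1))) < lam0 * N0 + lam0 * (((k:ℝ)-1) * (t*y u)^k)
    have hlhs : (k:ℝ) * (y u * -((t * y u) ^ (k - 1))) = -(k:ℝ) * (t ^ (k-1) * y u ^ k) := by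
      rw [mul_pow, hyusplit]; ring
    have hrhs : lam0 * (((k:ℝ) - 1) * (t * y u) ^ k) =
        (lam0 * ((k:ℝ) - 1) * t) * (t ^ (k-1) * y u ^ k) := by
      rw [hsplit, mul_pow, hyusplit]; ring
    rw [hlhs, hrhs]
    have := mul_lt_mul_of_pos_right hbound hP
    linarith
  have hfinal : lamMin (E0 ∪ EH) k * gk k z < lam0 * gk k z := lt_of_le_of_lt key hstrict
  exact (mul_lt_mul_iff_of_pos_right hgzpos).mp hfinal
end
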